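/- Let N ≥ 1. The ℝ-linear map Φ from the algebra of N-periodic difference operators to the algebra of N×N matrices over the Laurent polynomial ring ℝ[z, z^{−1}], defined by Φ(Σ_i a^i 𝒯^i) = Σ_i diag(a^i_1, …, a^i_N) · M^i, where M := Σ_{k=1}^{N−1} E_{k,k+1} + z E_{N,1} (an invertible matrix over ℝ[z, z^{−1}], with inverse M^{−1} = Σ_{k=1}^{N−1} E_{k+1,k} + z^{−1} E_{1,N}), is an isomorphism of ℝ-algebras. -/

import Mathlib

noncomputable section

/-- A (pseudo-)difference operator, given by its coefficient sequences:
`a i j` is the `j`-th entry of the coefficient sequence of `𝒯^i`. -/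
abbrev DOp : Type := ℤ → ℤ → ℝ

namespace DOp

/-- Product of difference operators, determined by `𝒯 ∘ a = (𝒯a) ∘ 𝒯`:
the coefficient of `𝒯^n` in `a * b` is `Σ_{i+j=n} a^i · 𝒯^i(b^j)`. -/
def mul (a b : DOp) : DOp := fun n j => ∑ᶠ i : ℤ, a i j * b (n - i) (j + i)

/-- The identity difference operator. -/
def one : DOp := fun n j => if n = 0 then 1 else 0

/-- The r-matrix `r(Σ_i a^i 𝒯^i) = ½(Σ_{i>0} a^i 𝒯^i − Σ_{i<0} a^i 𝒯^i)`. -/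
def rmat (a : DOp) : DOp := fun n j =>
  if 0 < n then a n j / 2 else if n < 0 then -(a n j) / 2 else 0

/-- A difference operator is a *finite* formal sum. -/
def FinSupp (a : DOp) : Prop := {i : ℤ | a i ≠ 0}.Finite

/-- `N`-periodicity of all coefficient sequences. -/
def Periodic (N : ℕ) (a : DOp) : Prop := ∀ i j, a i (j + (N : ℤ)) = a i j

/-- The trace of an `N`-periodic difference operator: `Tr D = Σ_{j=1}^N a^0_j`. -/
def trace (N : ℕ) (a : DOp) : ℝ := ∑ j ∈ Finset.Icc (1 : ℤ) (N : ℤ), a 0 j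

/-- The commutator `[A, B] = AB − BA` of difference operators. -/
def bracket (a b : DOp) : DOp := mul a b - mul b a

/-- An order-zero operator: termwise multiplication by the sequence `α`. -/
def ord0 (α : ℤ → ℝ) : DOp := fun n j => if n = 0 then α j else 0

/-- The operator `c ∘ 𝒯^k` for a sequence `c`. -/
def singleOp (k : ℤ) (c : ℤ → ℝ) : DOp := fun n j => if n = k then c j else 0

/-- The pure shift operator `𝒯^k`. -/
def Tpow (k : ℤ) : DOp := singleOp k fun _ => 1

end DOp

open LaurentPolynomial in
/-- The matrix `M = Σ_{k=1}^{N−1} E_{k,k+1} + z E_{N,1}` (0-indexed here). -/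
def Mmat (N : ℕ) : Matrix (Fin N) (Fin N) (LaurentPolynomial ℝ) :=
  Matrix.of fun k l : Fin N =>
    (if (l : ℕ) = (k : ℕ) + 1 then 1 else 0)
      + (if (k : ℕ) = N - 1 ∧ (l : ℕ) = 0 then T 1 else 0)

open LaurentPolynomial in
/-- The matrix `M⁻¹ = Σ_{k=1}^{N−1} E_{k+1,k} + z⁻¹ E_{1,N}` (0-indexed here). -/
def Minv (N : ℕ) : Matrix (Fin N) (Fin N) (LaurentPolynomial ℝ) :=
  Matrix.of fun k l : Fin N =>
    (if (k : ℕ) = (l : ℕ) + 1 then 1 else 0)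
      + (if (k : ℕ) = 0 ∧ (l : ℕ) = N - 1 then T (-1) else 0)

/-- Integer powers `M^i` of `M` (using the explicit inverse for negative `i`). -/
def Mzpow (N : ℕ) (i : ℤ) : Matrix (Fin N) (Fin N) (LaurentPolynomial ℝ) :=
  if 0 ≤ i then Mmat N ^ i.toNat else Minv N ^ (-i).toNat

/-- `Φ(Σ_i a^i 𝒯^i) = Σ_i diag(a^i_1, …, a^i_N) · M^i`. -/
def Phi (N : ℕ) (a : DOp) : Matrix (Fin N) (Fin N) (LaurentPolynomial ℝ) :=
  ∑ᶠ i : ℤ,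
    Matrix.diagonal (fun k : Fin N => LaurentPolynomial.C (a i ((k : ℕ) + 1))) * Mzpow N i

namespace StmtAux

open LaurentPolynomial Pointwise

/-- The matrix with `(k,l)` entry `T ((k+i-l)/N)` when `l ≡ k + i [mod N]`, else `0`. -/
def Em (N : ℕ) (i : ℤ) : Matrix (Fin N) (Fin N) (LaurentPolynomial ℝ) :=
  Matrix.of fun k l : Fin N =>
    if ((k : ℤ) + i) % (N : ℤ) = (l : ℤ) then T (((k : ℤ) + i - (l : ℤ)) / (N : ℤ)) else 0

lemma emod_eq_iff {N : ℕ} (hN : 0 < N) {x l : ℤ} (h0 : 0 ≤ l) (h1 : l < N) :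
    x % (N : ℤ) = l ↔ ∃ e : ℤ, x - l = N * e := by
  constructor
  · intro h
    exact ⟨x / N, by have := Int.emod_add_mul_ediv x N; omega⟩
  · rintro ⟨e, he⟩
    have hx : x = l + (N : ℤ) * e := by omega
    rw [hx, Int.add_mul_emod_self_left, Int.emod_eq_of_lt h0 h1]

lemma Em_zero (N : ℕ) : Em N 0 = 1 := by
  ext k l
  simp only [Em, Matrix.of_apply, add_zero, Matrix.one_apply]
  have hk : (k : ℤ) % (N : ℤ) = (k : ℤ) :=
    Int.emod_eq_of_lt (by positivity) (by exact_mod_cast k.isLt)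
  rw [hk]
  by_cases h : k = l
  · subst h; simp
  · have : (k : ℤ) ≠ (l : ℤ) := by
      simpa [Fin.ext_iff] using h
    simp [this, h]

lemma Em_mul {N : ℕ} (hN : 0 < N) (i j : ℤ) : Em N i * Em N j = Em N (i + j) := by
  have hNz : (N : ℤ) ≠ 0 := by exact_mod_cast hN.ne'
  refine Matrix.ext fun k l => ?_
  rw [Matrix.mul_apply]
  set t : Fin N := ⟨(((k : ℤ) + i) % (N : ℤ)).toNat, by
    have h1 : 0 ≤ ((k : ℤ) + i) % (N : ℤ) := Int.emod_nonneg _ hNz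
    have h2 : ((k : ℤ) + i) % (N : ℤ) < (N : ℤ) := Int.emod_lt_of_pos _ (by exact_mod_cast hN)
    omega⟩ with ht
  have htv : (t : ℤ) = ((k : ℤ) + i) % (N : ℤ) := by
    simp [ht, Int.toNat_of_nonneg (Int.emod_nonneg _ hNz)]
  rw [Finset.sum_eq_single t]
  · -- main term
    have hcond : ((k : ℤ) + i) % (N : ℤ) = (t : ℤ) := htv.symm
    obtain ⟨e, he⟩ := (emod_eq_iff hN (by positivity) (by exact_mod_cast t.isLt)).1 hcond
    simp only [Em, Matrix.of_apply]
    rw [if_pos hcond]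
    by_cases h2 : ((t : ℤ) + j) % (N : ℤ) = (l : ℤ)
    · obtain ⟨f, hf⟩ := (emod_eq_iff hN (by positivity) (by exact_mod_cast l.isLt)).1 h2
      have hcond' : ((k : ℤ) + (i + j)) % (N : ℤ) = (l : ℤ) :=
        (emod_eq_iff hN (by positivity) (by exact_mod_cast l.isLt)).2 ⟨e + f, by ring_nf; omega⟩
      rw [if_pos h2, if_pos hcond']
      have e1 : ((k : ℤ) + i - (t : ℤ)) / (N : ℤ) = e := by
        rw [he, Int.mul_ediv_cancel_left _ hNz]
      have e2 : ((t : ℤ) + j - (l : ℤ)) / (N : ℤ) = f := by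
        rw [hf, Int.mul_ediv_cancel_left _ hNz]
      have e3 : ((k : ℤ) + (i + j) - (l : ℤ)) / (N : ℤ) = e + f := by
        have : (k : ℤ) + (i + j) - (l : ℤ) = (N : ℤ) * (e + f) := by ring_nf; omega
        rw [this, Int.mul_ediv_cancel_left _ hNz]
      rw [e1, e2, e3, T_add]
    · have hcond' : ¬ ((k : ℤ) + (i + j)) % (N : ℤ) = (l : ℤ) := by
        intro hc
        apply h2
        obtain ⟨g, hg⟩ := (emod_eq_iff hN (by positivity) (by exact_mod_cast l.isLt)).1 hc
        exact (emod_eq_iff hN (by positivity) (by exact_mod_cast l.isLt)).2 ⟨g - e, by ring_nf; omega⟩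
      rw [if_neg h2, if_neg hcond', mul_zero]
  · intro m _ hm
    have : ¬ ((k : ℤ) + i) % (N : ℤ) = (m : ℤ) := by
      intro hc
      apply hm
      apply Fin.ext
      omega
    simp only [Em, Matrix.of_apply, this, if_false, zero_mul]
  · intro h
    exact absurd (Finset.mem_univ t) h


lemma Em_one {N : ℕ} (hN : 0 < N) : Em N 1 = Mmat N := by
  refine Matrix.ext fun k l => ?_
  have hk := k.isLt; have hl := l.isLt
  have hNz : (N : ℤ) ≠ 0 := by exact_mod_cast hN.ne'
  simp only [Em, Mmat, Matrix.of_apply]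
  by_cases hc : (l : ℕ) = (k : ℕ) + 1
  · have h1 : ((k : ℤ) + 1) % (N : ℤ) = (l : ℤ) := by
      rw [Int.emod_eq_of_lt (by positivity) (by omega)]; omega
    have h2 : ((k : ℤ) + 1 - (l : ℤ)) / (N : ℤ) = 0 := by
      have : (k : ℤ) + 1 - (l : ℤ) = 0 := by omega
      simp [this]
    rw [if_pos h1, h2, if_pos hc, if_neg (by omega), T_zero, add_zero]
  · by_cases hk1 : (k : ℕ) = N - 1 ∧ (l : ℕ) = 0
    · have hkN : (k : ℤ) + 1 = (N : ℤ) := by omega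
      have h1 : ((k : ℤ) + 1) % (N : ℤ) = (l : ℤ) := by
        rw [hkN, Int.emod_self]; omega
      have h2 : ((k : ℤ) + 1 - (l : ℤ)) / (N : ℤ) = 1 := by
        have : (k : ℤ) + 1 - (l : ℤ) = (N : ℤ) := by omega
        rw [this, Int.ediv_self hNz]
      rw [if_pos h1, h2, if_neg (by omega), if_pos hk1, zero_add]
    · have h1 : ¬ ((k : ℤ) + 1) % (N : ℤ) = (l : ℤ) := by
        intro h
        obtain ⟨e, he⟩ := (emod_eq_iff hN (by positivity) (by omega)).1 h
        have hd0 : (k : ℤ) + 1 - (l : ℤ) ≠ 0 := by omega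
        have h3 : (N : ℤ) ≤ |(k : ℤ) + 1 - (l : ℤ)| :=
          Int.le_of_dvd (abs_pos.mpr hd0) ((dvd_abs _ _).2 ⟨e, he⟩)
        rcases abs_cases ((k : ℤ) + 1 - (l : ℤ)) with ⟨h4, _⟩ | ⟨h4, _⟩ <;> omega
      rw [if_neg h1, if_neg (by omega), if_neg hk1, add_zero]

lemma Em_neg_one {N : ℕ} (hN : 0 < N) : Em N (-1) = Minv N := by
  refine Matrix.ext fun k l => ?_
  have hk := k.isLt; have hl := l.isLt
  have hNz : (N : ℤ) ≠ 0 := by exact_mod_cast hN.ne'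
  simp only [Em, Minv, Matrix.of_apply]
  by_cases hc : (k : ℕ) = (l : ℕ) + 1
  · have h1 : ((k : ℤ) + (-1)) % (N : ℤ) = (l : ℤ) := by
      rw [Int.emod_eq_of_lt (by omega) (by omega)]; omega
    have h2 : ((k : ℤ) + (-1) - (l : ℤ)) / (N : ℤ) = 0 := by
      have : (k : ℤ) + (-1) - (l : ℤ) = 0 := by omega
      simp [this]
    rw [if_pos h1, h2, if_pos hc, if_neg (by omega), T_zero, add_zero]
  · by_cases hk1 : (k : ℕ) = 0 ∧ (l : ℕ) = N - 1
    · have h1 : ((k : ℤ) + (-1)) % (N : ℤ) = (l : ℤ) := by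
        have hkN : (k : ℤ) + (-1) = (l : ℤ) + (N : ℤ) * (-1) := by omega
        rw [hkN, Int.add_mul_emod_self_left, Int.emod_eq_of_lt (by omega) (by omega)]
      have h2 : ((k : ℤ) + (-1) - (l : ℤ)) / (N : ℤ) = -1 := by
        have : (k : ℤ) + (-1) - (l : ℤ) = (N : ℤ) * (-1) := by omega
        rw [this, Int.mul_ediv_cancel_left _ hNz]
      rw [if_pos h1, h2, if_neg (by omega), if_pos hk1, zero_add]
    · have h1 : ¬ ((k : ℤ) + (-1)) % (N : ℤ) = (l : ℤ) := by
        intro h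
        obtain ⟨e, he⟩ := (emod_eq_iff hN (by positivity) (by omega)).1 h
        have hd0 : (k : ℤ) + (-1) - (l : ℤ) ≠ 0 := by omega
        have h3 : (N : ℤ) ≤ |(k : ℤ) + (-1) - (l : ℤ)| :=
          Int.le_of_dvd (abs_pos.mpr hd0) ((dvd_abs _ _).2 ⟨e, he⟩)
        rcases abs_cases ((k : ℤ) + (-1) - (l : ℤ)) with ⟨h4, _⟩ | ⟨h4, _⟩ <;> omega
      rw [if_neg h1, if_neg (by omega), if_neg hk1, add_zero]

lemma Mmat_pow {N : ℕ} (hN : 0 < N) (n : ℕ) : Mmat N ^ n = Em N (n : ℤ) := by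
  induction n with
  | zero => simpa using (Em_zero N).symm
  | succ n ih =>
      rw [pow_succ, ih, ← Em_one hN, Em_mul hN]
      norm_cast

lemma Minv_pow {N : ℕ} (hN : 0 < N) (n : ℕ) : Minv N ^ n = Em N (-(n : ℤ)) := by
  induction n with
  | zero => simpa using (Em_zero N).symm
  | succ n ih =>
      rw [pow_succ, ih, ← Em_neg_one hN, Em_mul hN]
      congr 1
      push_cast
      ring

lemma Mzpow_eq {N : ℕ} (hN : 0 < N) (i : ℤ) : Mzpow N i = Em N i := by
  unfold Mzpow
  split
  · next h =>
      rw [Mmat_pow hN]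
      have hi : ((i.toNat : ℕ) : ℤ) = i := by omega
      rw [hi]
  · next h =>
      rw [Minv_pow hN]
      have hi : (-(((-i).toNat : ℕ) : ℤ)) = i := by omega
      rw [hi]

lemma Mzpow_mul {N : ℕ} (hN : 0 < N) (i j : ℤ) :
    Mzpow N i * Mzpow N j = Mzpow N (i + j) := by
  rw [Mzpow_eq hN, Mzpow_eq hN, Mzpow_eq hN, Em_mul hN]

lemma Mzpow_zero (N : ℕ) : Mzpow N 0 = 1 := by simp [Mzpow]

/-- The diagonal part of a summand of `Phi`. -/
def Dg (N : ℕ) (a : DOp) (i : ℤ) : Matrix (Fin N) (Fin N) (LaurentPolynomial ℝ) :=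
  Matrix.diagonal (fun k : Fin N => C (a i ((k : ℕ) + 1)))

lemma Phi_eq_sum {N : ℕ} (a : DOp) {s : Finset ℤ} (hs : ∀ i ∉ s, a i = 0) :
    Phi N a = ∑ i ∈ s, Dg N a i * Mzpow N i := by
  unfold Phi Dg
  apply finsum_eq_finset_sum_of_support_subset
  intro i hi
  simp only [Function.mem_support] at hi
  by_contra hmem
  apply hi
  have h0 : a i = 0 := hs i hmem
  have : Dg N a i = 0 := by
    unfold Dg
    have : (fun k : Fin N => C (a i ((k : ℕ) + 1))) = fun _ => 0 := by
      funext k; rw [h0]; simp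
    rw [this, Matrix.diagonal_zero]
  unfold Dg at this
  rw [this, Matrix.zero_mul]

lemma periodic_mul_int {N : ℕ} {a : DOp} (ha : DOp.Periodic N a) (i j t : ℤ) :
    a i (j + (N : ℤ) * t) = a i j := by
  induction t using Int.induction_on with
  | zero => simp
  | succ t ih =>
      have e : j + (N : ℤ) * ((t : ℤ) + 1) = (j + (N : ℤ) * t) + (N : ℤ) := by ring
      rw [e, ha, ih]
  | pred t ih =>
      have e : j + (N : ℤ) * (-(t : ℤ) - 1) + (N : ℤ) = j + (N : ℤ) * (-(t : ℤ)) := by ring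
      calc a i (j + (N : ℤ) * (-(t : ℤ) - 1))
          = a i (j + (N : ℤ) * (-(t : ℤ) - 1) + (N : ℤ)) := (ha i _).symm
        _ = a i (j + (N : ℤ) * (-(t : ℤ))) := by rw [e]
        _ = a i j := ih

lemma periodic_congr {N : ℕ} {a : DOp} (ha : DOp.Periodic N a) {i x y : ℤ}
    (h : (N : ℤ) ∣ (x - y)) : a i x = a i y := by
  obtain ⟨t, ht⟩ := h
  have hx : x = y + (N : ℤ) * t := by linarith
  rw [hx, periodic_mul_int ha]

lemma Em_mul_diag {N : ℕ} (hN : 0 < N) {b : DOp} (hb : DOp.Periodic N b) (i n : ℤ) :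
    Em N i * Matrix.diagonal (fun k : Fin N => C (b n ((k : ℕ) + 1))) =
      Matrix.diagonal (fun k : Fin N => C (b n ((k : ℕ) + 1 + i))) * Em N i := by
  refine Matrix.ext fun k l => ?_
  rw [Matrix.mul_diagonal, Matrix.diagonal_mul]
  simp only [Em, Matrix.of_apply]
  by_cases h : ((k : ℤ) + i) % (N : ℤ) = (l : ℤ)
  · rw [if_pos h]
    obtain ⟨e, he⟩ := (emod_eq_iff hN (by positivity) (by exact_mod_cast l.isLt)).1 h
    have hb' : b n (((l : ℕ) : ℤ) + 1) = b n (((k : ℕ) : ℤ) + 1 + i) :=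
      periodic_congr hb ⟨-e, by push_cast; linarith⟩
    rw [hb', mul_comm]
  · rw [if_neg h, zero_mul, mul_zero]

lemma Mzpow_mul_diag {N : ℕ} (hN : 0 < N) {b : DOp} (hb : DOp.Periodic N b) (i n : ℤ) :
    Mzpow N i * Matrix.diagonal (fun k : Fin N => C (b n ((k : ℕ) + 1))) =
      Matrix.diagonal (fun k : Fin N => C (b n ((k : ℕ) + 1 + i))) * Mzpow N i := by
  rw [Mzpow_eq hN, Em_mul_diag hN hb]

lemma diagonal_sum' {N : ℕ} {ι : Type*} (s : Finset ι) (f : ι → Fin N → LaurentPolynomial ℝ) :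
    Matrix.diagonal (fun k => ∑ i ∈ s, f i k) = ∑ i ∈ s, Matrix.diagonal (f i) := by
  induction s using Finset.cons_induction with
  | empty => simp
  | cons x s hx ih =>
      have harg : (fun k => ∑ i ∈ Finset.cons x s hx, f i k)
          = fun k => f x k + ∑ i ∈ s, f i k := by
        funext k; simp [Finset.sum_cons]
      rw [harg, ← Matrix.diagonal_add, ih, Finset.sum_cons]

lemma Phi_mul {N : ℕ} (hN : 0 < N) (a b : DOp) (ha : DOp.FinSupp a) (hb : DOp.FinSupp b)
    (hpb : DOp.Periodic N b) :
    Phi N (DOp.mul a b) = Phi N a * Phi N b := by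
  classical
  set sa := ha.toFinset with hsa
  set sb := hb.toFinset with hsb
  have hmem_a : ∀ i ∉ sa, a i = 0 := fun i hi =>
    not_not.1 fun h => hi (ha.mem_toFinset.mpr h)
  have hmem_b : ∀ i ∉ sb, b i = 0 := fun i hi =>
    not_not.1 fun h => hi (hb.mem_toFinset.mpr h)
  have hmul_supp : ∀ n ∉ sa + sb, DOp.mul a b n = 0 := by
    intro n hn
    funext j
    have hz : ∀ i : ℤ, a i j * b (n - i) (j + i) = 0 := by
      intro i
      by_cases hia : a i = 0
      · rw [hia]; simp
      · have hib : b (n - i) = 0 := by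
          apply hmem_b
          intro hbmem
          apply hn
          have := Finset.add_mem_add (ha.mem_toFinset.mpr hia) hbmem
          simpa using this
        rw [hib]; simp
    show (∑ᶠ i : ℤ, a i j * b (n - i) (j + i)) = 0
    simp only [hz]
    exact finsum_zero
  have hmul_eq : ∀ n j, DOp.mul a b n j = ∑ i ∈ sa, a i j * b (n - i) (j + i) := by
    intro n j
    apply finsum_eq_finset_sum_of_support_subset
    intro i hi
    simp only [Function.mem_support] at hi
    by_contra hmem
    exact hi (by rw [hmem_a i hmem]; simp)
  rw [Phi_eq_sum (DOp.mul a b) hmul_supp, Phi_eq_sum a hmem_a, Phi_eq_sum b hmem_b,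
    Finset.sum_mul_sum]
  have lhs_eq : ∀ n : ℤ, Dg N (DOp.mul a b) n * Mzpow N n =
      ∑ i ∈ sa, (Matrix.diagonal (fun k : Fin N =>
        C (a i ((k : ℕ) + 1) * b (n - i) (((k : ℕ) + 1 : ℤ) + i))) * Mzpow N n) := by
    intro n
    rw [← Finset.sum_mul]
    have harg : (fun k : Fin N => C (DOp.mul a b n ((k : ℕ) + 1))) =
        fun k : Fin N => ∑ i ∈ sa, C (a i ((k : ℕ) + 1) * b (n - i) (((k : ℕ) + 1 : ℤ) + i)) := by
      funext k
      rw [hmul_eq, map_sum]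
    unfold Dg
    rw [harg, diagonal_sum']
  calc ∑ n ∈ sa + sb, Dg N (DOp.mul a b) n * Mzpow N n
      = ∑ n ∈ sa + sb, ∑ i ∈ sa, (Matrix.diagonal (fun k : Fin N =>
          C (a i ((k : ℕ) + 1) * b (n - i) (((k : ℕ) + 1 : ℤ) + i))) * Mzpow N n) :=
        Finset.sum_congr rfl fun n _ => lhs_eq n
    _ = ∑ i ∈ sa, ∑ n ∈ sa + sb, (Matrix.diagonal (fun k : Fin N =>
          C (a i ((k : ℕ) + 1) * b (n - i) (((k : ℕ) + 1 : ℤ) + i))) * Mzpow N n) :=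
        Finset.sum_comm
    _ = ∑ i ∈ sa, ∑ j ∈ sb, (Matrix.diagonal (fun k : Fin N =>
          C (a i ((k : ℕ) + 1) * b j (((k : ℕ) + 1 : ℤ) + i))) * Mzpow N (i + j)) := by
        refine Finset.sum_congr rfl fun i hi => ?_
        have hsub : Finset.image (fun j => i + j) sb ⊆ sa + sb := by
          intro n hn
          simp only [Finset.mem_image] at hn
          obtain ⟨j, hj, rfl⟩ := hn
          exact Finset.add_mem_add hi hj
        have hvan : ∀ n ∈ sa + sb, n ∉ Finset.image (fun j => i + j) sb →
            (Matrix.diagonal (fun k : Fin N =>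
              C (a i ((k : ℕ) + 1) * b (n - i) (((k : ℕ) + 1 : ℤ) + i))) * Mzpow N n) = 0 := by
          intro n _ hnotimg
          have hbz : b (n - i) = 0 := by
            apply hmem_b
            intro hmem
            exact hnotimg (Finset.mem_image.mpr ⟨n - i, hmem, by ring⟩)
          have hz : (fun k : Fin N =>
              C (a i ((k : ℕ) + 1) * b (n - i) (((k : ℕ) + 1 : ℤ) + i))) = fun _ => 0 := by
            funext k; rw [hbz]; simp
          rw [hz, Matrix.diagonal_zero, Matrix.zero_mul]
        rw [← Finset.sum_subset hsub hvan, Finset.sum_image (fun x _ y _ h => by omega)]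
        refine Finset.sum_congr rfl fun j _ => ?_
        simp only [add_sub_cancel_left]
    _ = ∑ i ∈ sa, ∑ j ∈ sb, Dg N a i * Mzpow N i * (Dg N b j * Mzpow N j) := by
        refine Finset.sum_congr rfl fun i _ => Finset.sum_congr rfl fun j _ => ?_
        rw [mul_assoc (Dg N a i), ← mul_assoc (Mzpow N i)]
        unfold Dg
        rw [Mzpow_mul_diag hN hpb i j, mul_assoc _ (Mzpow N i), Mzpow_mul hN, ← mul_assoc,
          Matrix.diagonal_mul_diagonal]
        have harg : (fun k : Fin N => C (a i ((k : ℕ) + 1)) * C (b j ((k : ℕ) + 1 + i))) =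
            fun k : Fin N => C (a i ((k : ℕ) + 1) * b j (((k : ℕ) + 1 : ℤ) + i)) := by
          funext k; rw [← map_mul]
        rw [harg]

lemma smul_eq_C_mul' (c : ℝ) (p : LaurentPolynomial ℝ) : c • p = C c * p := by
  rw [Algebra.smul_def]; rfl

lemma Phi_coeff {N : ℕ} (hN : 0 < N) {a : DOp} (ha : DOp.FinSupp a) (k l : Fin N) (m : ℤ) :
    (Phi N a k l).coeff m = a ((l : ℤ) - (k : ℤ) + (N : ℤ) * m) (((k : ℕ) : ℤ) + 1) := by
  classical
  have hNz : (N : ℤ) ≠ 0 := by exact_mod_cast hN.ne'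
  set i0 : ℤ := (l : ℤ) - (k : ℤ) + (N : ℤ) * m with hi0
  set s : Finset ℤ := insert i0 ha.toFinset with hsdef
  have hs : ∀ i ∉ s, a i = 0 := by
    intro i hi
    apply not_not.1
    intro hne
    exact hi (Finset.mem_insert_of_mem (ha.mem_toFinset.mpr hne))
  rw [Phi_eq_sum a hs, Matrix.sum_apply, AddMonoidAlgebra.coeff_sum, Finsupp.finset_sum_apply]
  have h2 : ∀ i ∈ s, ((Dg N a i * Mzpow N i) k l).coeff m =
      if i = i0 then a i0 (((k : ℕ) : ℤ) + 1) else 0 := by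
    intro i _
    rw [Mzpow_eq hN]
    unfold Dg Em
    rw [Matrix.diagonal_mul]
    simp only [Matrix.of_apply]
    rw [mul_ite, mul_zero, ← single_eq_C_mul_T]
    by_cases hc : ((k : ℤ) + i) % (N : ℤ) = (l : ℤ)
    · rw [if_pos hc, AddMonoidAlgebra.coeff_single, Finsupp.single_apply]
      obtain ⟨e', he'⟩ := (emod_eq_iff hN (by positivity) (by exact_mod_cast l.isLt)).1 hc
      have hdiv : ((k : ℤ) + i - (l : ℤ)) / (N : ℤ) = e' := by
        rw [he', Int.mul_ediv_cancel_left _ hNz]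
      rw [hdiv]
      by_cases hi : i = i0
      · have he : e' = m := by
          apply mul_left_cancel₀ hNz
          rw [← he', hi, hi0]; ring
        rw [if_pos he, hi, if_pos rfl]
      · have he : e' ≠ m := by
          intro he
          apply hi
          rw [hi0]
          have : (k : ℤ) + i - (l : ℤ) = (N : ℤ) * m := by rw [he', he]
          linarith
        rw [if_neg he, if_neg hi]
    · have hi : i ≠ i0 := by
        intro hi
        apply hc
        rw [hi, hi0]
        have : (k : ℤ) + ((l : ℤ) - (k : ℤ) + (N : ℤ) * m) = (l : ℤ) + (N : ℤ) * m := by ring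
        rw [this, Int.add_mul_emod_self_left,
          Int.emod_eq_of_lt (by positivity) (by exact_mod_cast l.isLt)]
      rw [if_neg hc, if_neg hi]
      simp
  rw [Finset.sum_congr rfl h2, Finset.sum_ite_eq' s i0 (fun _ => a i0 (((k : ℕ) : ℤ) + 1)),
    if_pos (Finset.mem_insert_self i0 _)]

lemma Phi_linear {N : ℕ} (a b : DOp) (ha : DOp.FinSupp a) (hb : DOp.FinSupp b) (c : ℝ) :
    Phi N (fun i j => c * a i j + b i j) = c • Phi N a + Phi N b := by
  classical
  set s := ha.toFinset ∪ hb.toFinset with hsdef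
  have hsa : ∀ i ∉ s, a i = 0 := fun i hi =>
    not_not.1 fun h => hi (Finset.mem_union_left _ (ha.mem_toFinset.mpr h))
  have hsb : ∀ i ∉ s, b i = 0 := fun i hi =>
    not_not.1 fun h => hi (Finset.mem_union_right _ (hb.mem_toFinset.mpr h))
  have hsc : ∀ i ∉ s, (fun i j => c * a i j + b i j) i = 0 := by
    intro i hi
    funext j
    show c * a i j + b i j = (0 : ℤ → ℝ) j
    rw [hsa i hi, hsb i hi]
    simp
  rw [Phi_eq_sum _ hsc, Phi_eq_sum a hsa, Phi_eq_sum b hsb, Finset.smul_sum,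
    ← Finset.sum_add_distrib]
  refine Finset.sum_congr rfl fun i _ => ?_
  have hD : Dg N (fun i j => c * a i j + b i j) i = c • Dg N a i + Dg N b i := by
    unfold Dg
    refine Matrix.ext fun p q => ?_
    by_cases h : p = q
    · subst h
      simp [Matrix.diagonal_apply_eq, map_add, map_mul, smul_eq_C_mul', Matrix.smul_apply]
    · simp [Matrix.diagonal_apply_ne _ h, Matrix.smul_apply, h]
  rw [hD, add_mul, smul_mul_assoc]

lemma Phi_one {N : ℕ} : Phi N DOp.one = 1 := by
  classical
  have hs : ∀ i ∉ ({0} : Finset ℤ), DOp.one i = 0 := by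
    intro i hi
    funext j
    have : i ≠ 0 := by simpa using hi
    simp [DOp.one, this]
  rw [Phi_eq_sum _ hs, Finset.sum_singleton]
  unfold Dg
  rw [Mzpow_zero]
  have harg : (fun k : Fin N => C (DOp.one 0 ((k : ℕ) + 1))) = fun _ => 1 := by
    funext k; simp [DOp.one]
  rw [harg, Matrix.diagonal_one, mul_one]

def kOf (N : ℕ) (hN : 0 < N) (j : ℤ) : Fin N :=
  ⟨((j - 1) % (N : ℤ)).toNat, by
    have hNz : (N : ℤ) ≠ 0 := by exact_mod_cast hN.ne'
    have h1 := Int.emod_nonneg (j - 1) hNz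
    have h2 := Int.emod_lt_of_pos (j - 1) (by exact_mod_cast hN : (0 : ℤ) < (N : ℤ))
    omega⟩

def lOf (N : ℕ) (hN : 0 < N) (i j : ℤ) : Fin N :=
  ⟨((((kOf N hN j : ℕ) : ℤ) + i) % (N : ℤ)).toNat, by
    have hNz : (N : ℤ) ≠ 0 := by exact_mod_cast hN.ne'
    have h1 := Int.emod_nonneg (((kOf N hN j : ℕ) : ℤ) + i) hNz
    have h2 := Int.emod_lt_of_pos (((kOf N hN j : ℕ) : ℤ) + i)
      (by exact_mod_cast hN : (0 : ℤ) < (N : ℤ))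
    omega⟩

def mOf (N : ℕ) (hN : 0 < N) (i j : ℤ) : ℤ :=
  (((kOf N hN j : ℕ) : ℤ) + i - ((lOf N hN i j : ℕ) : ℤ)) / (N : ℤ)

/-- The inverse map of `Phi`. -/
def PhiInv (N : ℕ) (hN : 0 < N) (P : Matrix (Fin N) (Fin N) (LaurentPolynomial ℝ)) : DOp :=
  fun i j => (P (kOf N hN j) (lOf N hN i j)).coeff (mOf N hN i j)

lemma kOf_val {N : ℕ} (hN : 0 < N) (j : ℤ) :
    ((kOf N hN j : ℕ) : ℤ) = (j - 1) % (N : ℤ) := by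
  have hNz : (N : ℤ) ≠ 0 := by exact_mod_cast hN.ne'
  simp [kOf, Int.toNat_of_nonneg (Int.emod_nonneg _ hNz)]

lemma lOf_val {N : ℕ} (hN : 0 < N) (i j : ℤ) :
    ((lOf N hN i j : ℕ) : ℤ) = (((kOf N hN j : ℕ) : ℤ) + i) % (N : ℤ) := by
  have hNz : (N : ℤ) ≠ 0 := by exact_mod_cast hN.ne'
  simp [lOf, Int.toNat_of_nonneg (Int.emod_nonneg _ hNz)]

lemma kOf_add_N {N : ℕ} (hN : 0 < N) (j : ℤ) : kOf N hN (j + (N : ℤ)) = kOf N hN j := by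
  apply Fin.ext
  have he : j + (N : ℤ) - 1 = (j - 1) + (N : ℤ) * 1 := by ring
  simp only [kOf]
  rw [he, Int.add_mul_emod_self_left]

lemma lOf_add_N {N : ℕ} (hN : 0 < N) (i j : ℤ) :
    lOf N hN i (j + (N : ℤ)) = lOf N hN i j := by
  apply Fin.ext
  simp only [lOf]
  rw [kOf_add_N hN]

lemma mOf_add_N {N : ℕ} (hN : 0 < N) (i j : ℤ) :
    mOf N hN i (j + (N : ℤ)) = mOf N hN i j := by
  unfold mOf
  rw [kOf_add_N hN, lOf_add_N hN]

lemma kOf_fin {N : ℕ} (hN : 0 < N) (k : Fin N) : kOf N hN (((k : ℕ) : ℤ) + 1) = k := by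
  apply Fin.ext
  have he : ((k : ℕ) : ℤ) + 1 - 1 = ((k : ℕ) : ℤ) := by ring
  simp only [kOf]
  rw [he, Int.emod_eq_of_lt (by positivity) (by exact_mod_cast k.isLt)]
  simp

lemma lOf_fin {N : ℕ} (hN : 0 < N) (k l : Fin N) (m : ℤ) :
    lOf N hN ((l : ℤ) - (k : ℤ) + (N : ℤ) * m) (((k : ℕ) : ℤ) + 1) = l := by
  apply Fin.ext
  simp only [lOf, kOf_fin hN]
  have he : ((k : ℕ) : ℤ) + ((l : ℤ) - (k : ℤ) + (N : ℤ) * m)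
      = ((l : ℕ) : ℤ) + (N : ℤ) * m := by ring
  rw [he, Int.add_mul_emod_self_left,
    Int.emod_eq_of_lt (by positivity) (by exact_mod_cast l.isLt)]
  simp

lemma mOf_fin {N : ℕ} (hN : 0 < N) (k l : Fin N) (m : ℤ) :
    mOf N hN ((l : ℤ) - (k : ℤ) + (N : ℤ) * m) (((k : ℕ) : ℤ) + 1) = m := by
  have hNz : (N : ℤ) ≠ 0 := by exact_mod_cast hN.ne'
  unfold mOf
  rw [kOf_fin hN, lOf_fin hN]
  have he : ((k : ℕ) : ℤ) + ((l : ℤ) - (k : ℤ) + (N : ℤ) * m) - ((l : ℕ) : ℤ)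
      = (N : ℤ) * m := by ring
  rw [he, Int.mul_ediv_cancel_left _ hNz]

end StmtAux

/-- `M` is invertible with the stated inverse, and `Φ` is an
isomorphism of ℝ-algebras from the `N`-periodic difference operators onto the
`N×N` matrices over the Laurent polynomial ring `ℝ[z, z⁻¹]`:
it is multiplicative, ℝ-linear, unital, and a bijection. -/
theorem stmt2 (N : ℕ) (hN : 1 ≤ N) :
    (Mmat N * Minv N = 1 ∧ Minv N * Mmat N = 1) ∧
    (∀ a b : DOp, DOp.FinSupp a → DOp.FinSupp b →
      DOp.Periodic N a → DOp.Periodic N b →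
      Phi N (DOp.mul a b) = Phi N a * Phi N b) ∧
    (∀ a b : DOp, DOp.FinSupp a → DOp.FinSupp b → ∀ c : ℝ,
      Phi N (fun i j => c * a i j + b i j) = c • Phi N a + Phi N b) ∧
    Phi N DOp.one = 1 ∧
    Set.BijOn (Phi N) {a : DOp | DOp.FinSupp a ∧ DOp.Periodic N a} Set.univ := by
  have hN0 : 0 < N := hN
  have hpos : (0 : ℤ) < (N : ℤ) := by exact_mod_cast hN0
  have hNz : (N : ℤ) ≠ 0 := ne_of_gt hpos
  have hmodlt : ∀ x : ℤ, (x % (N : ℤ)).toNat < N := by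
    intro x
    have h1 := Int.emod_nonneg x hNz
    have h2 := Int.emod_lt_of_pos x hpos
    omega
  refine ⟨⟨?_, ?_⟩, fun a b ha hb hpa hpb => StmtAux.Phi_mul hN0 a b ha hb hpb,
    fun a b ha hb c => StmtAux.Phi_linear a b ha hb c, StmtAux.Phi_one, ?_, ?_, ?_⟩
  · rw [← StmtAux.Em_one hN0, ← StmtAux.Em_neg_one hN0, StmtAux.Em_mul hN0]
    have : (1 : ℤ) + -1 = 0 := by norm_num
    rw [this, StmtAux.Em_zero]
  · rw [← StmtAux.Em_one hN0, ← StmtAux.Em_neg_one hN0, StmtAux.Em_mul hN0]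
    have : (-1 : ℤ) + 1 = 0 := by norm_num
    rw [this, StmtAux.Em_zero]
  · exact fun a _ => Set.mem_univ _
  · -- injectivity
    intro x hx y hy hxy
    obtain ⟨hxf, hxp⟩ := hx
    obtain ⟨hyf, hyp⟩ := hy
    funext i j
    set k : Fin N := ⟨((j - 1) % (N : ℤ)).toNat, hmodlt _⟩ with hk
    have hkv : ((k : ℕ) : ℤ) = (j - 1) % (N : ℤ) := by
      simp [hk, Int.toNat_of_nonneg (Int.emod_nonneg _ hNz)]
    set l : Fin N := ⟨((((k : ℕ) : ℤ) + i) % (N : ℤ)).toNat, hmodlt _⟩ with hl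
    have hlv : ((l : ℕ) : ℤ) = (((k : ℕ) : ℤ) + i) % (N : ℤ) := by
      simp [hl, Int.toNat_of_nonneg (Int.emod_nonneg _ hNz)]
    have hdvd : (N : ℤ) ∣ (((k : ℕ) : ℤ) + i - ((l : ℕ) : ℤ)) := by
      rw [hlv]
      exact Int.dvd_self_sub_of_emod_eq rfl
    obtain ⟨m, hm⟩ := hdvd
    have hi0 : ((l : ℕ) : ℤ) - ((k : ℕ) : ℤ) + (N : ℤ) * m = i := by linarith
    have h1 := StmtAux.Phi_coeff hN0 hxf k l m
    have h2 := StmtAux.Phi_coeff hN0 hyf k l m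
    rw [hxy] at h1
    have hxy' : x i (((k : ℕ) : ℤ) + 1) = y i (((k : ℕ) : ℤ) + 1) := by
      rw [← hi0]
      exact h1.symm.trans h2
    have hdvd2 : (N : ℤ) ∣ (j - (((k : ℕ) : ℤ) + 1)) := by
      rw [hkv]
      have he : j - ((j - 1) % (N : ℤ) + 1) = (j - 1) - (j - 1) % (N : ℤ) := by ring
      rw [he]
      exact Int.dvd_self_sub_of_emod_eq rfl
    calc x i j = x i (((k : ℕ) : ℤ) + 1) := StmtAux.periodic_congr hxp hdvd2
      _ = y i (((k : ℕ) : ℤ) + 1) := hxy'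
      _ = y i j := (StmtAux.periodic_congr hyp hdvd2).symm
  · -- surjectivity
    intro P _
    classical
    set a : DOp := StmtAux.PhiInv N hN0 P with hadef
    have hper : DOp.Periodic N a := by
      intro i j
      show StmtAux.PhiInv N hN0 P i (j + (N : ℤ)) = StmtAux.PhiInv N hN0 P i j
      unfold StmtAux.PhiInv
      rw [StmtAux.kOf_add_N hN0 j, StmtAux.lOf_add_N hN0, StmtAux.mOf_add_N hN0]
    have hfin : DOp.FinSupp a := by
      apply Set.Finite.subset (s := ⋃ p : Fin N × Fin N,
        (fun m => ((p.2 : ℕ) : ℤ) - ((p.1 : ℕ) : ℤ) + (N : ℤ) * m) ''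
          ((P p.1 p.2).coeff.support : Set ℤ))
      · exact Set.finite_iUnion fun p => ((P p.1 p.2).coeff.support.finite_toSet).image _
      · intro i hi
        simp only [Set.mem_setOf_eq] at hi
        have hex : ∃ j, a i j ≠ 0 := by
          by_contra h
          push_neg at h
          exact hi (funext h)
        obtain ⟨j, hj⟩ := hex
        have hdvd : (N : ℤ) ∣ (((StmtAux.kOf N hN0 j : ℕ) : ℤ) + i
            - ((StmtAux.lOf N hN0 i j : ℕ) : ℤ)) := by
          rw [StmtAux.lOf_val hN0]
          exact Int.dvd_self_sub_of_emod_eq rfl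
        have hmval : (N : ℤ) * StmtAux.mOf N hN0 i j = ((StmtAux.kOf N hN0 j : ℕ) : ℤ) + i
            - ((StmtAux.lOf N hN0 i j : ℕ) : ℤ) := by
          unfold StmtAux.mOf
          exact Int.mul_ediv_cancel' hdvd
        refine Set.mem_iUnion.mpr ⟨(StmtAux.kOf N hN0 j, StmtAux.lOf N hN0 i j),
          ⟨StmtAux.mOf N hN0 i j, ?_, ?_⟩⟩
        · simp only [Finset.coe_sort_coe, Finsupp.mem_support_iff, Finset.mem_coe]
          simpa [hadef, StmtAux.PhiInv] using hj
        · simp only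
          linarith
    refine ⟨a, ⟨hfin, hper⟩, ?_⟩
    refine Matrix.ext fun k l => ?_
    refine AddMonoidAlgebra.coeff_injective (Finsupp.ext fun m => ?_)
    rw [StmtAux.Phi_coeff hN0 hfin k l m]
    show StmtAux.PhiInv N hN0 P ((l : ℤ) - (k : ℤ) + (N : ℤ) * m) (((k : ℕ) : ℤ) + 1) = (P k l).coeff m
    unfold StmtAux.PhiInv
    rw [StmtAux.kOf_fin hN0, StmtAux.lOf_fin hN0, StmtAux.mOf_fin hN0]
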